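/- Construct a strictly positive joint pmf over binary Z, A, M, Y (as the margin of a hidden-variable model with binary U where p(z,u,a,m,y) = p(z)·p(u)·p(a | z,u)·p(m | a,z,u)·p(y | m,u), i.e., U also confounds M) such that the Verma constraint fails: there exist y, z, z', m with Σ_a p(a | z)·p(y | z, a, m) ≠ Σ_a p(a | z')·p(y | z', a, m). (It suffices to exhibit explicit numerical conditional probability tables.) -/
import Mathlib


open Finset

noncomputable def paT : Bool → Bool → ℝ
  | false, false => 3/10
  | false, true => 7/10
  | true, false => 6/10
  | true, true => 2/10

noncomputable def pmT : Bool → Bool → ℝ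
  | false, false => 2/10
  | false, true => 8/10
  | true, false => 7/10
  | true, true => 4/10

noncomputable def pyT : Bool → Bool → ℝ
  | false, false => 3/10
  | false, true => 6/10
  | true, false => 8/10
  | true, true => 5/10

noncomputable def pJ (z a m y : Bool) : ℝ := ∑ u, (1/2 : ℝ) * (1/2) *
  (if a then paT z u else 1 - paT z u) *
  (if m then pmT a u else 1 - pmT a u) *
  (if y then pyT m u else 1 - pyT m u)

/-- There exists a strictly positive joint pmf over binary `Z, A, M, Y`,
arising as the margin of a hidden-variable model `p(z)·p(u)·p(a|z,u)·p(m|a,z,u)·p(y|m,u)`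
with binary `U` also confounding `M`, for which the Verma constraint fails: there are
`y, z, z', m` with `∑ a, p(a|z)·p(y|z,a,m) ≠ ∑ a, p(a|z')·p(y|z',a,m)`. -/
theorem stmt_17 :
    ∃ (pz pu : Bool → ℝ) (pa : Bool → Bool → Bool → ℝ)
      (pm : Bool → Bool → Bool → Bool → ℝ) (py : Bool → Bool → Bool → ℝ)
      (p : Bool → Bool → Bool → Bool → ℝ) (qY : Bool → Bool → Bool → ℝ),
      (∀ z, 0 < pz z) ∧ (∀ u, 0 < pu u) ∧ (∀ a z u, 0 < pa a z u) ∧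
      (∀ m a z u, 0 < pm m a z u) ∧ (∀ y m u, 0 < py y m u) ∧
      (∑ z, pz z = 1) ∧ (∑ u, pu u = 1) ∧
      (∀ z u, ∑ a, pa a z u = 1) ∧ (∀ a z u, ∑ m, pm m a z u = 1) ∧
      (∀ m u, ∑ y, py y m u = 1) ∧
      (∀ z a m y, p z a m y = ∑ u, pz z * pu u * pa a z u * pm m a z u * py y m u) ∧
      (∀ y z m, qY y z m =
        ∑ a, ((∑ m', ∑ y', p z a m' y') / (∑ a', ∑ m', ∑ y', p z a' m' y')) *
          (p z a m y / (∑ y', p z a m y'))) ∧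
      (∃ y z z' m, qY y z m ≠ qY y z' m) := by
  refine ⟨fun _ => 1/2, fun _ => 1/2,
    fun a z u => if a then paT z u else 1 - paT z u,
    fun m a z u => if m then pmT a u else 1 - pmT a u,
    fun y m u => if y then pyT m u else 1 - pyT m u,
    pJ,
    fun y z m => ∑ a, ((∑ m', ∑ y', pJ z a m' y') / (∑ a', ∑ m', ∑ y', pJ z a' m' y')) *
      (pJ z a m y / (∑ y', pJ z a m y')),
    ?_, ?_, ?_, ?_, ?_, ?_, ?_, ?_, ?_, ?_, fun _ _ _ _ => rfl,
    fun _ _ _ => rfl, ?_⟩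
  · norm_num
  · norm_num
  · intro a z u; cases a <;> cases z <;> cases u <;> simp [paT] <;> norm_num
  · intro m a z u; cases m <;> cases a <;> cases u <;> simp [pmT] <;> norm_num
  · intro y m u; cases y <;> cases m <;> cases u <;> simp [pyT] <;> norm_num
  · simp [Fintype.sum_bool]
  · simp [Fintype.sum_bool]
  · intro z u; simp [Fintype.sum_bool]
  · intro a z u; simp [Fintype.sum_bool]
  · intro m u; simp [Fintype.sum_bool]
  · refine ⟨true, false, true, false, ?_⟩
    simp only [Fintype.sum_bool, pJ, paT, pmT, pyT, if_true, if_false]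
    norm_num
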